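/- Subcartesian product: let Δ2 be a resolved 2-(v2,k2,μ) design with b2 blocks partitioned into r resolution classes (each class a partition of the drug set), and let Δ1 be a 2-(v1,k1,λ) design with b1 blocks where r divides b1. Partition the blocks of Δ1 arbitrarily into r classes of size b1/r, match the classes, and for each matched pair take all cartesian products of a block of the Δ1-class with a block of the Δ2-class. The result is a 2-part 2-design with b1*b2/r blocks. -/

import Mathlib

open Finset

/-- Sum over the first coordinate. -/
lemma pair_card_fst {α β : Type*} [Fintype α] [Fintype β] [DecidableEq α] [DecidableEq β]
    {r : ℕ} (f : α → Fin r) (h : β → Fin r) (P : α → Prop) (Q : β → Prop)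
    [DecidablePred P] [DecidablePred Q] :
    (univ.filter (fun z : α × β => f z.1 = h z.2 ∧ P z.1 ∧ Q z.2)).card
      = ∑ a ∈ univ.filter P, (univ.filter (fun b => Q b ∧ h b = f a)).card := by
  rw [Finset.card_eq_sum_card_fiberwise
      (f := fun z : α × β => z.1) (t := univ.filter P)
      (by intro z hz; simp only [coe_filter, Set.mem_setOf_eq, mem_filter, mem_univ, true_and] at hz ⊢; exact hz.2.1)]
  refine sum_congr rfl fun a ha => ?_
  simp only [mem_filter, mem_univ, true_and] at ha
  refine Finset.card_nbij' (fun z => z.2) (fun b => (a, b)) ?_ ?_ ?_ ?_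
  · intro z hz; simp only [coe_filter, Set.mem_setOf_eq, mem_filter, mem_univ, true_and] at hz ⊢
    obtain ⟨⟨h1, h2, h3⟩, h4⟩ := hz; subst h4; exact ⟨h3, h1.symm⟩
  · intro b hb; simp only [coe_filter, Set.mem_setOf_eq, mem_filter, mem_univ, true_and] at hb ⊢
    exact ⟨⟨hb.2.symm, ha, hb.1⟩, trivial⟩
  · intro z hz; simp only [coe_filter, Set.mem_setOf_eq, mem_filter, mem_univ, true_and] at hz
    obtain ⟨_, h4⟩ := hz; rw [← h4]
  · intro b _; rfl

/-- Sum over the second coordinate. -/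
lemma pair_card_snd {α β : Type*} [Fintype α] [Fintype β] [DecidableEq α] [DecidableEq β]
    {r : ℕ} (f : α → Fin r) (h : β → Fin r) (P : α → Prop) (Q : β → Prop)
    [DecidablePred P] [DecidablePred Q] :
    (univ.filter (fun z : α × β => f z.1 = h z.2 ∧ P z.1 ∧ Q z.2)).card
      = ∑ b ∈ univ.filter Q, (univ.filter (fun a => P a ∧ f a = h b)).card := by
  rw [Finset.card_eq_sum_card_fiberwise
      (f := fun z : α × β => z.2) (t := univ.filter Q)
      (by intro z hz; simp only [coe_filter, Set.mem_setOf_eq, mem_filter, mem_univ, true_and] at hz ⊢; exact hz.2.2)]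
  refine sum_congr rfl fun b hb => ?_
  simp only [mem_filter, mem_univ, true_and] at hb
  refine Finset.card_nbij' (fun z => z.1) (fun a => (a, b)) ?_ ?_ ?_ ?_
  · intro z hz; simp only [coe_filter, Set.mem_setOf_eq, mem_filter, mem_univ, true_and] at hz ⊢
    obtain ⟨⟨h1, h2, h3⟩, h4⟩ := hz; subst h4; exact ⟨h2, h1⟩
  · intro a haa; simp only [coe_filter, Set.mem_setOf_eq, mem_filter, mem_univ, true_and] at haa ⊢
    exact ⟨⟨haa.2, haa.1, hb⟩, trivial⟩
  · intro z hz; simp only [coe_filter, Set.mem_setOf_eq, mem_filter, mem_univ, true_and] at hz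
    obtain ⟨_, h4⟩ := hz; rw [← h4]
  · intro a _; rfl

/-- Replication count. -/
lemma rep_const {v b k lam : ℕ} (A : Fin b → Finset (Fin v))
    (hA : ∀ i, (A i).card = k)
    (hdes : ∀ x y : Fin v, x ≠ y →
      (univ.filter (fun i => x ∈ A i ∧ y ∈ A i)).card = lam) (x : Fin v) :
    (univ.filter (fun i => x ∈ A i)).card * (k - 1) = lam * (v - 1) := by
  have key : ∀ i : Fin b, x ∈ A i → ((univ.erase x).filter (· ∈ A i)).card = k - 1 := by
    intro i hx
    have he : (univ.erase x).filter (· ∈ A i) = (A i).erase x := by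
      ext z; simp [mem_erase, and_comm]
    rw [he, card_erase_of_mem hx, hA]
  have main : ∑ i ∈ univ.filter (fun i => x ∈ A i), ((univ.erase x).filter (· ∈ A i)).card
      = ∑ z ∈ univ.erase x, (univ.filter (fun i => x ∈ A i ∧ z ∈ A i)).card := by
    simp_rw [Finset.card_filter]
    rw [Finset.sum_comm]
    refine sum_congr rfl fun z hz => ?_
    rw [Finset.sum_filter]
    refine sum_congr rfl fun i _ => ?_
    by_cases h1 : x ∈ A i <;> simp [h1]
  calc (univ.filter (fun i => x ∈ A i)).card * (k - 1)
      = ∑ i ∈ univ.filter (fun i => x ∈ A i), (k - 1) := by rw [sum_const, smul_eq_mul]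
    _ = ∑ i ∈ univ.filter (fun i => x ∈ A i), ((univ.erase x).filter (· ∈ A i)).card := by
        refine (sum_congr rfl fun i hi => ?_).symm
        exact key i (by simpa using hi)
    _ = ∑ z ∈ univ.erase x, (univ.filter (fun i => x ∈ A i ∧ z ∈ A i)).card := main
    _ = ∑ z ∈ univ.erase x, lam := by
        refine sum_congr rfl fun z hz => ?_
        exact hdes x z (Ne.symm (by simpa using hz))
    _ = lam * (v - 1) := by
        rw [sum_const, smul_eq_mul, card_erase_of_mem (mem_univ x), card_univ,
          Fintype.card_fin, mul_comm]
theorem subcartesian_product_two_part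
    (v1 v2 b1 b2 k1 k2 lam mu r : ℕ) (hr : 0 < r) (hdvd : r ∣ b1)
    (A : Fin b1 → Finset (Fin v1)) (B : Fin b2 → Finset (Fin v2))
    (hA : ∀ i, (A i).card = k1) (hB : ∀ i, (B i).card = k2)
    (hk1 : 1 < k1) (hk1v : k1 < v1) (hk2 : 1 < k2) (hk2v : k2 < v2)
    (hlam : 0 < lam) (hmu : 0 < mu)
    (hdes1 : ∀ x y : Fin v1, x ≠ y →
      (Finset.univ.filter (fun i => x ∈ A i ∧ y ∈ A i)).card = lam)
    (hdes2 : ∀ x y : Fin v2, x ≠ y →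
      (Finset.univ.filter (fun i => x ∈ B i ∧ y ∈ B i)).card = mu)
    (g1 : Fin b1 → Fin r) (g2 : Fin b2 → Fin r)
    (hclass1 : ∀ j : Fin r, (Finset.univ.filter (fun i => g1 i = j)).card * r = b1)
    (hres2 : ∀ (j : Fin r) (y : Fin v2), ∃! i : Fin b2, g2 i = j ∧ y ∈ B i) :
    ((Finset.univ.filter (fun p : Fin b1 × Fin b2 => g1 p.1 = g2 p.2)).card * r
       = b1 * b2) ∧
    (∃ l11 > 0, ∀ x y : Fin v1, x ≠ y →
      ((Finset.univ.filter (fun p : Fin b1 × Fin b2 => g1 p.1 = g2 p.2)).filter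
        (fun p => x ∈ A p.1 ∧ y ∈ A p.1)).card = l11) ∧
    (∃ l22 > 0, ∀ x y : Fin v2, x ≠ y →
      ((Finset.univ.filter (fun p : Fin b1 × Fin b2 => g1 p.1 = g2 p.2)).filter
        (fun p => x ∈ B p.2 ∧ y ∈ B p.2)).card = l22) ∧
    (∃ l12, ∀ (x : Fin v1) (y : Fin v2),
      ((Finset.univ.filter (fun p : Fin b1 × Fin b2 => g1 p.1 = g2 p.2)).filter
        (fun p => x ∈ A p.1 ∧ y ∈ B p.2)).card = l12) := by
  classical
  -- basic positivity
  have hv1 : 2 < v1 := lt_of_le_of_lt hk1 hk1v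
  have hv2 : 0 < v2 := by omega
  set m := b1 / r with hm_def
  set c := v2 / k2 with hc_def
  have hm : ∀ j : Fin r, (Finset.univ.filter (fun i => g1 i = j)).card = m := by
    intro j
    exact (Nat.div_eq_of_eq_mul_left hr (hclass1 j).symm).symm
  have hmr : m * r = b1 := Nat.div_mul_cancel hdvd
  have hb1 : 0 < b1 := by
    have hxy : (⟨0, by omega⟩ : Fin v1) ≠ ⟨1, by omega⟩ := by
      simp [Fin.ext_iff]
    have := hdes1 ⟨0, by omega⟩ ⟨1, by omega⟩ hxy
    have hle : (Finset.univ.filter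
        (fun i => (⟨0, by omega⟩ : Fin v1) ∈ A i ∧ (⟨1, by omega⟩ : Fin v1) ∈ A i)).card
        ≤ b1 := le_trans (card_le_univ _) (by simp)
    omega
  have hmpos : 0 < m := by
    rcases Nat.eq_zero_or_pos m with h | h
    · rw [h, zero_mul] at hmr; omega
    · exact h
  -- class sizes in the resolved design
  have hck : ∀ j : Fin r, (Finset.univ.filter (fun i => g2 i = j)).card * k2 = v2 := by
    intro j
    have hdisj : ((Finset.univ.filter (fun i => g2 i = j) : Finset (Fin b2)) : Set (Fin b2)).PairwiseDisjoint B := by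
      intro i1 h1 i2 h2 hne
      simp only [coe_filter, Set.mem_setOf_eq, mem_univ, true_and] at h1 h2
      refine Finset.disjoint_left.mpr fun y hy1 hy2 => hne ?_
      obtain ⟨i, _, huniq⟩ := hres2 j y
      rw [huniq i1 ⟨h1, hy1⟩, huniq i2 ⟨h2, hy2⟩]
    have hcover : (Finset.univ.filter (fun i => g2 i = j)).biUnion B = Finset.univ := by
      refine Finset.eq_univ_of_forall fun y => ?_
      obtain ⟨i, ⟨hi1, hi2⟩, _⟩ := hres2 j y
      exact Finset.mem_biUnion.mpr ⟨i, by simp [hi1], hi2⟩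
    have := Finset.card_biUnion (fun i h1 i2 h2 hne => hdisj h1 h2 hne)
        (s := Finset.univ.filter (fun i => g2 i = j)) (t := B)
    rw [hcover] at this
    have hsum : ∑ i ∈ Finset.univ.filter (fun i => g2 i = j), (B i).card
        = (Finset.univ.filter (fun i => g2 i = j)).card * k2 := by
      rw [Finset.sum_congr rfl (fun i _ => hB i), sum_const, smul_eq_mul]
    simp only [card_univ, Fintype.card_fin] at this
    omega
  have hc : ∀ j : Fin r, (Finset.univ.filter (fun i => g2 i = j)).card = c := by
    intro j
    exact (Nat.div_eq_of_eq_mul_left (by omega) (hck j).symm).symm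
  have hcpos : 0 < c := by
    have h0 := hck ⟨0, hr⟩
    rw [hc ⟨0, hr⟩] at h0
    rcases Nat.eq_zero_or_pos c with h | h
    · rw [h, zero_mul] at h0; omega
    · exact h
  refine ⟨?_, ?_, ?_, ?_⟩
  · -- total block count
    have he : Finset.univ.filter (fun p : Fin b1 × Fin b2 => g1 p.1 = g2 p.2)
        = Finset.univ.filter (fun z : Fin b1 × Fin b2 =>
            g1 z.1 = g2 z.2 ∧ ((fun _ => True) z.1 ∧ (fun _ => True) z.2)) := by
      simp
    rw [he, pair_card_snd g1 g2 (fun _ => True) (fun _ => True)]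
    simp only [filter_true, true_and]
    have : ∀ b : Fin b2, (Finset.univ.filter (fun a => g1 a = g2 b)).card = m :=
      fun b => hm (g2 b)
    rw [Finset.sum_congr rfl (fun b _ => this b), sum_const, smul_eq_mul, card_univ,
      Fintype.card_fin]
    rw [mul_assoc, hmr, mul_comm]
  · -- l11
    refine ⟨lam * c, by positivity, fun x y hxy => ?_⟩
    rw [Finset.filter_filter]
    have he : (Finset.univ.filter (fun p : Fin b1 × Fin b2 =>
          g1 p.1 = g2 p.2 ∧ (x ∈ A p.1 ∧ y ∈ A p.1)))
        = Finset.univ.filter (fun z : Fin b1 × Fin b2 =>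
            g1 z.1 = g2 z.2 ∧ ((fun a => x ∈ A a ∧ y ∈ A a) z.1 ∧ (fun _ => True) z.2)) := by
      simp
    rw [he]
    refine (pair_card_fst g1 g2 (fun a => x ∈ A a ∧ y ∈ A a) (fun _ => True)).trans ?_
    have : ∀ a : Fin b1, (Finset.univ.filter (fun b => True ∧ g2 b = g1 a)).card = c := by
      intro a
      simp only [true_and]
      exact hc (g1 a)
    rw [Finset.sum_congr rfl (fun a _ => this a), sum_const, smul_eq_mul,
      hdes1 x y hxy]
  · -- l22
    refine ⟨mu * m, by positivity, fun x y hxy => ?_⟩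
    rw [Finset.filter_filter]
    have he : (Finset.univ.filter (fun p : Fin b1 × Fin b2 =>
          g1 p.1 = g2 p.2 ∧ (x ∈ B p.2 ∧ y ∈ B p.2)))
        = Finset.univ.filter (fun z : Fin b1 × Fin b2 =>
            g1 z.1 = g2 z.2 ∧ ((fun _ => True) z.1 ∧ (fun b => x ∈ B b ∧ y ∈ B b) z.2)) := by
      simp
    rw [he]
    refine (pair_card_snd g1 g2 (fun _ => True) (fun b => x ∈ B b ∧ y ∈ B b)).trans ?_
    have : ∀ b : Fin b2, (Finset.univ.filter (fun a => True ∧ g1 a = g2 b)).card = m := by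
      intro b
      simp only [true_and]
      exact hm (g2 b)
    rw [Finset.sum_congr rfl (fun b _ => this b), sum_const, smul_eq_mul,
      hdes2 x y hxy]
  · -- l12
    set x0 : Fin v1 := ⟨0, by omega⟩ with hx0
    refine ⟨(Finset.univ.filter (fun i => x0 ∈ A i)).card, fun x y => ?_⟩
    rw [Finset.filter_filter]
    have he : (Finset.univ.filter (fun p : Fin b1 × Fin b2 =>
          g1 p.1 = g2 p.2 ∧ (x ∈ A p.1 ∧ y ∈ B p.2)))
        = Finset.univ.filter (fun z : Fin b1 × Fin b2 =>
            g1 z.1 = g2 z.2 ∧ ((fun a => x ∈ A a) z.1 ∧ (fun b => y ∈ B b) z.2)) := by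
      simp
    rw [he]
    refine (pair_card_fst g1 g2 (fun a => x ∈ A a) (fun b => y ∈ B b)).trans ?_
    have hone : ∀ a : Fin b1, (Finset.univ.filter (fun b => y ∈ B b ∧ g2 b = g1 a)).card = 1 := by
      intro a
      obtain ⟨i, ⟨hi1, hi2⟩, huniq⟩ := hres2 (g1 a) y
      rw [Finset.card_eq_one]
      refine ⟨i, ?_⟩
      ext b
      simp only [mem_filter, mem_univ, true_and, mem_singleton]
      constructor
      · rintro ⟨h1, h2⟩; exact huniq b ⟨h2, h1⟩
      · rintro rfl; exact ⟨hi2, hi1⟩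
    rw [Finset.sum_congr rfl (fun a _ => hone a), sum_const, smul_eq_mul, mul_one]
    -- replication number is constant
    have h1 := rep_const A hA hdes1 x
    have h2 := rep_const A hA hdes1 x0
    have hk1' : 0 < k1 - 1 := by omega
    exact Nat.eq_of_mul_eq_mul_right hk1' (by rw [h1, h2])
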